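/- Let 0 ≤ β < 1, ε > 0, d ≥ 1, and ω a fixed sequence in {-1,1}^ℕ. Define Z_N(ω) = Σ_{l=1}^{N} Σ_{0=i_0<i_1<...<i_l=N} ε^{l-1} (2π)^{-dl/2} ∏_{j=1}^{l} [∏_{n=i_{j-1}}^{i_j-1}(1+βω_n) · Σ_{n=i_{j-1}}^{i_j-1}(1+βω_n)^{-1}]^{-d/2}. Then for all 0 < M < N: Z_N(ω) ≥ Z_M(ω) · ε · Z_{N-M}(θ^M ω), where θ is the shift (θ^M ω)_n = ω_{M+n}. -/

import Mathlib

open Finset Real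

open scoped Classical

/-- Combinatorial expansion of the gradient pinning partition function:
the sum runs over the number `l` of excursions and over the increasing
sequences `0 = i₀ < i₁ < ⋯ < i_l = N` of pinned sites. -/
noncomputable def gradPinningZ (d : ℕ) (β ε : ℝ) (ω : ℕ → ℝ) (N : ℕ) : ℝ :=
  ∑ l ∈ Finset.Icc 1 N,
    ∑ i ∈ Finset.univ.filter (fun i : Fin (l + 1) → Fin (N + 1) =>
        StrictMono i ∧ i 0 = 0 ∧ i (Fin.last l) = Fin.last N),
      ε ^ (l - 1) * (2 * π) ^ (-((d : ℝ) * l) / 2) *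
        ∏ j : Fin l,
          ((∏ n ∈ Finset.Ico (i j.castSucc : ℕ) (i j.succ : ℕ), (1 + β * ω n)) *
              ∑ n ∈ Finset.Ico (i j.castSucc : ℕ) (i j.succ : ℕ),
                (1 + β * ω n)⁻¹) ^ (-(d : ℝ) / 2)

/-- The summand of `gradPinningZ`. -/
noncomputable def pinTerm (d : ℕ) (β ε : ℝ) (ω : ℕ → ℝ) (N l : ℕ)
    (i : Fin (l + 1) → Fin (N + 1)) : ℝ :=
  ε ^ (l - 1) * (2 * π) ^ (-((d : ℝ) * l) / 2) *
    ∏ j : Fin l,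
      ((∏ n ∈ Finset.Ico (i j.castSucc : ℕ) (i j.succ : ℕ), (1 + β * ω n)) *
          ∑ n ∈ Finset.Ico (i j.castSucc : ℕ) (i j.succ : ℕ),
            (1 + β * ω n)⁻¹) ^ (-(d : ℝ) / 2)

/-- The index set of `gradPinningZ` as a single sigma-type finset. -/
noncomputable def pinSet (N : ℕ) : Finset (Σ l : ℕ, Fin (l + 1) → Fin (N + 1)) :=
  (Finset.Icc 1 N).sigma fun l => Finset.univ.filter
    (fun i : Fin (l + 1) → Fin (N + 1) =>
      StrictMono i ∧ i 0 = 0 ∧ i (Fin.last l) = Fin.last N)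

lemma gradPinningZ_eq (d : ℕ) (β ε : ℝ) (ω : ℕ → ℝ) (N : ℕ) :
    gradPinningZ d β ε ω N = ∑ x ∈ pinSet N, pinTerm d β ε ω N x.1 x.2 := by
  rw [gradPinningZ, pinSet, Finset.sum_sigma]
  rfl

lemma pinTerm_nonneg {d : ℕ} {β ε : ℝ} (hβ0 : 0 ≤ β) (hβ1 : β < 1) (hε : 0 ≤ ε)
    {ω : ℕ → ℝ} (hω : ∀ n, ω n = 1 ∨ ω n = -1) (N l : ℕ)
    (i : Fin (l + 1) → Fin (N + 1)) :
    0 ≤ pinTerm d β ε ω N l i := by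
  have h1 : ∀ n, (0 : ℝ) ≤ 1 + β * ω n := by
    intro n; rcases hω n with h | h <;> rw [h] <;> nlinarith
  unfold pinTerm
  apply mul_nonneg (mul_nonneg (pow_nonneg hε _) (Real.rpow_nonneg (by positivity) _))
  apply Finset.prod_nonneg
  intro t _
  apply Real.rpow_nonneg
  apply mul_nonneg (Finset.prod_nonneg fun n _ => h1 n)
  exact Finset.sum_nonneg fun n _ => inv_nonneg.mpr (h1 n)

/-- Concatenation of two pinned-site sequences. -/
def glue (M N : ℕ) (hMN : M ≤ N) {l₁ l₂ : ℕ}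
    (i : Fin (l₁ + 1) → Fin (M + 1)) (j : Fin (l₂ + 1) → Fin (N - M + 1)) :
    Fin (l₁ + l₂ + 1) → Fin (N + 1) := fun t =>
  if h : (t : ℕ) ≤ l₁ then
    ⟨(i ⟨t, by omega⟩ : ℕ), by have := (i ⟨t, by omega⟩).isLt; omega⟩
  else
    ⟨M + (j ⟨(t : ℕ) - l₁, by have := t.isLt; omega⟩ : ℕ), by
      have := (j ⟨(t : ℕ) - l₁, by have := t.isLt; omega⟩).isLt; omega⟩

lemma glue_val_le {M N : ℕ} (hMN : M ≤ N) {l₁ l₂ : ℕ}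
    (i : Fin (l₁ + 1) → Fin (M + 1)) (j : Fin (l₂ + 1) → Fin (N - M + 1))
    (t : Fin (l₁ + l₂ + 1)) (ht : (t : ℕ) < l₁ + 1) :
    (glue M N hMN i j t : ℕ) = (i ⟨t, ht⟩ : ℕ) := by
  rw [glue, dif_pos (by omega : (t : ℕ) ≤ l₁)]

lemma glue_val_gt {M N : ℕ} (hMN : M ≤ N) {l₁ l₂ : ℕ}
    (i : Fin (l₁ + 1) → Fin (M + 1)) (j : Fin (l₂ + 1) → Fin (N - M + 1))
    (t : Fin (l₁ + l₂ + 1)) (ht : l₁ < (t : ℕ)) (ht2 : (t : ℕ) - l₁ < l₂ + 1) :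
    (glue M N hMN i j t : ℕ) = M + (j ⟨(t : ℕ) - l₁, ht2⟩ : ℕ) := by
  rw [glue, dif_neg (by omega)]

lemma glue_val_ge {M N : ℕ} (hMN : M ≤ N) {l₁ l₂ : ℕ}
    (i : Fin (l₁ + 1) → Fin (M + 1)) (j : Fin (l₂ + 1) → Fin (N - M + 1))
    (hil : i (Fin.last l₁) = Fin.last M) (hj0 : j 0 = 0)
    (t : Fin (l₁ + l₂ + 1)) (h : l₁ ≤ (t : ℕ)) (ht2 : (t : ℕ) - l₁ < l₂ + 1) :
    (glue M N hMN i j t : ℕ) = M + (j ⟨(t : ℕ) - l₁, ht2⟩ : ℕ) := by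
  rcases eq_or_lt_of_le h with h0 | h0
  · rw [glue_val_le hMN i j t (by omega)]
    rw [show (⟨(t : ℕ), by omega⟩ : Fin (l₁ + 1)) = Fin.last l₁ from Fin.ext (by simp [Fin.last]; omega)]
    rw [show (⟨(t : ℕ) - l₁, ht2⟩ : Fin (l₂ + 1)) = 0 from Fin.ext (by simp; omega)]
    rw [hil, hj0]
    simp [Fin.last]
  · exact glue_val_gt hMN i j t h0 ht2

lemma glue_strictMono {M N : ℕ} (hMN : M ≤ N) {l₁ l₂ : ℕ}
    {i : Fin (l₁ + 1) → Fin (M + 1)} {j : Fin (l₂ + 1) → Fin (N - M + 1)}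
    (hi : StrictMono i) (hj : StrictMono j) (hj0 : j 0 = 0) :
    StrictMono (glue M N hMN i j) := by
  have himono : ∀ x y : Fin (l₁ + 1), (x : ℕ) < (y : ℕ) → (i x : ℕ) < (i y : ℕ) := by
    intro x y h
    exact hi (show x < y from h)
  have hjmono : ∀ x y : Fin (l₂ + 1), (x : ℕ) < (y : ℕ) → (j x : ℕ) < (j y : ℕ) := by
    intro x y h
    exact hj (show x < y from h)
  have hjpos : ∀ x : Fin (l₂ + 1), 0 < (x : ℕ) → 0 < (j x : ℕ) := by
    intro x hx
    have h := hjmono 0 x (by simpa using hx)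
    rw [hj0] at h
    simpa using h
  intro a b hab
  have hab' : (a : ℕ) < (b : ℕ) := hab
  show (glue M N hMN i j a : ℕ) < (glue M N hMN i j b : ℕ)
  by_cases ha : (a : ℕ) ≤ l₁
  · by_cases hb : (b : ℕ) ≤ l₁
    · rw [glue_val_le hMN i j a (by omega), glue_val_le hMN i j b (by omega)]
      exact himono _ _ hab'
    · rw [glue_val_le hMN i j a (by omega),
        glue_val_gt hMN i j b (by omega) (by have := b.isLt; omega)]
      have h1 : (i ⟨(a : ℕ), by omega⟩ : ℕ) ≤ M := by
        have := (i ⟨(a : ℕ), by omega⟩).isLt; omega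
      have h2 := hjpos ⟨(b : ℕ) - l₁, by have := b.isLt; omega⟩ (by simp; omega)
      omega
  · have hb : ¬ (b : ℕ) ≤ l₁ := by omega
    rw [glue_val_gt hMN i j a (by omega) (by have := a.isLt; omega),
      glue_val_gt hMN i j b (by omega) (by have := b.isLt; omega)]
    have := hjmono ⟨(a : ℕ) - l₁, by have := a.isLt; omega⟩
      ⟨(b : ℕ) - l₁, by have := b.isLt; omega⟩ (by simp; omega)
    omega

lemma glue_zero {M N : ℕ} (hMN : M ≤ N) {l₁ l₂ : ℕ}
    (i : Fin (l₁ + 1) → Fin (M + 1)) (j : Fin (l₂ + 1) → Fin (N - M + 1))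
    (hi0 : i 0 = 0) : glue M N hMN i j 0 = 0 := by
  apply Fin.ext
  have h : ((0 : Fin (l₁ + l₂ + 1)) : ℕ) < l₁ + 1 := by simp
  rw [Fin.val_zero, glue_val_le hMN i j 0 h,
    show (⟨((0 : Fin (l₁ + l₂ + 1)) : ℕ), h⟩ : Fin (l₁ + 1)) = 0 from Fin.ext (by simp),
    hi0, Fin.val_zero]

lemma glue_last {M N : ℕ} (hMN : M ≤ N) {l₁ l₂ : ℕ} (hl₂ : 1 ≤ l₂)
    (i : Fin (l₁ + 1) → Fin (M + 1)) (j : Fin (l₂ + 1) → Fin (N - M + 1))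
    (hil : i (Fin.last l₁) = Fin.last M)
    (hjl : j (Fin.last l₂) = Fin.last (N - M)) :
    glue M N hMN i j (Fin.last (l₁ + l₂)) = Fin.last N := by
  apply Fin.ext
  have h1 : l₁ < ((Fin.last (l₁ + l₂) : Fin (l₁ + l₂ + 1)) : ℕ) := by
    simp [Fin.last]; omega
  have h2 : ((Fin.last (l₁ + l₂) : Fin (l₁ + l₂ + 1)) : ℕ) - l₁ < l₂ + 1 := by
    simp [Fin.last]
  rw [glue_val_gt hMN i j _ h1 h2,
    show (⟨((Fin.last (l₁ + l₂) : Fin (l₁ + l₂ + 1)) : ℕ) - l₁, h2⟩ : Fin (l₂ + 1)) =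
      Fin.last l₂ from Fin.ext (by simp [Fin.last]),
    hjl]
  simp [Fin.last]
  omega

lemma glue_mem {M N : ℕ} (hM : 0 < M) (hMN : M < N) {l₁ l₂ : ℕ}
    {i : Fin (l₁ + 1) → Fin (M + 1)} {j : Fin (l₂ + 1) → Fin (N - M + 1)}
    (hi : (⟨l₁, i⟩ : Σ l : ℕ, Fin (l + 1) → Fin (M + 1)) ∈ pinSet M)
    (hj : (⟨l₂, j⟩ : Σ l : ℕ, Fin (l + 1) → Fin (N - M + 1)) ∈ pinSet (N - M)) :
    (⟨l₁ + l₂, glue M N hMN.le i j⟩ : Σ l : ℕ, Fin (l + 1) → Fin (N + 1)) ∈ pinSet N := by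
  simp only [pinSet, Finset.mem_sigma, Finset.mem_filter, Finset.mem_univ, true_and,
    Finset.mem_Icc] at hi hj ⊢
  obtain ⟨⟨hl1, hl1'⟩, him, hi0, hil⟩ := hi
  obtain ⟨⟨hl2, hl2'⟩, hjm, hj0, hjl⟩ := hj
  exact ⟨⟨by omega, by omega⟩, glue_strictMono hMN.le him hjm hj0,
    glue_zero hMN.le i j hi0, glue_last hMN.le hl2 i j hil hjl⟩

lemma glue_val_le' {M N : ℕ} (hMN : M ≤ N) {l₁ l₂ : ℕ}
    (i : Fin (l₁ + 1) → Fin (M + 1)) (j : Fin (l₂ + 1) → Fin (N - M + 1))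
    (t : Fin (l₁ + l₂ + 1)) (s : Fin (l₁ + 1)) (hts : (t : ℕ) = (s : ℕ)) :
    (glue M N hMN i j t : ℕ) = (i s : ℕ) := by
  rw [glue_val_le hMN i j t (by have := s.isLt; omega)]
  exact congrArg (fun x => (i x : ℕ)) (Fin.ext hts)

lemma glue_val_ge' {M N : ℕ} (hMN : M ≤ N) {l₁ l₂ : ℕ}
    (i : Fin (l₁ + 1) → Fin (M + 1)) (j : Fin (l₂ + 1) → Fin (N - M + 1))
    (hil : i (Fin.last l₁) = Fin.last M) (hj0 : j 0 = 0)
    (t : Fin (l₁ + l₂ + 1)) (s : Fin (l₂ + 1)) (hts : (t : ℕ) = l₁ + (s : ℕ)) :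
    (glue M N hMN i j t : ℕ) = M + (j s : ℕ) := by
  rw [glue_val_ge hMN i j hil hj0 t (by omega) (by have := s.isLt; omega)]
  exact congrArg (fun x => M + (j x : ℕ))
    (Fin.ext (show (t : ℕ) - l₁ = (s : ℕ) by omega))

lemma pinTerm_glue (d : ℕ) (β ε : ℝ) (ω : ℕ → ℝ)
    (M N : ℕ) (hMN : M ≤ N) {l₁ l₂ : ℕ} (hl₁ : 1 ≤ l₁) (hl₂ : 1 ≤ l₂)
    (i : Fin (l₁ + 1) → Fin (M + 1)) (j : Fin (l₂ + 1) → Fin (N - M + 1))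
    (hil : i (Fin.last l₁) = Fin.last M) (hj0 : j 0 = 0) :
    pinTerm d β ε ω M l₁ i * ε * pinTerm d β ε (fun n => ω (M + n)) (N - M) l₂ j
      = pinTerm d β ε ω N (l₁ + l₂) (glue M N hMN i j) := by
  unfold pinTerm
  rw [Fin.prod_univ_add]
  have hA : ∀ t : Fin l₁,
      ((∏ n ∈ Finset.Ico ((glue M N hMN i j) (Fin.castAdd l₂ t).castSucc : ℕ)
            ((glue M N hMN i j) (Fin.castAdd l₂ t).succ : ℕ), (1 + β * ω n)) *
          ∑ n ∈ Finset.Ico ((glue M N hMN i j) (Fin.castAdd l₂ t).castSucc : ℕ)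
            ((glue M N hMN i j) (Fin.castAdd l₂ t).succ : ℕ),
            (1 + β * ω n)⁻¹) ^ (-(d : ℝ) / 2)
      = ((∏ n ∈ Finset.Ico (i t.castSucc : ℕ) (i t.succ : ℕ), (1 + β * ω n)) *
          ∑ n ∈ Finset.Ico (i t.castSucc : ℕ) (i t.succ : ℕ),
            (1 + β * ω n)⁻¹) ^ (-(d : ℝ) / 2) := by
    intro t
    have e1 : ((glue M N hMN i j) (Fin.castAdd l₂ t).castSucc : ℕ) = (i t.castSucc : ℕ) :=
      glue_val_le' hMN i j _ t.castSucc (by simp)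
    have e2 : ((glue M N hMN i j) (Fin.castAdd l₂ t).succ : ℕ) = (i t.succ : ℕ) :=
      glue_val_le' hMN i j _ t.succ (by simp)
    rw [e1, e2]
  have hB : ∀ t : Fin l₂,
      ((∏ n ∈ Finset.Ico ((glue M N hMN i j) (Fin.natAdd l₁ t).castSucc : ℕ)
            ((glue M N hMN i j) (Fin.natAdd l₁ t).succ : ℕ), (1 + β * ω n)) *
          ∑ n ∈ Finset.Ico ((glue M N hMN i j) (Fin.natAdd l₁ t).castSucc : ℕ)
            ((glue M N hMN i j) (Fin.natAdd l₁ t).succ : ℕ),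
            (1 + β * ω n)⁻¹) ^ (-(d : ℝ) / 2)
      = ((∏ n ∈ Finset.Ico (j t.castSucc : ℕ) (j t.succ : ℕ),
            (1 + β * (fun n => ω (M + n)) n)) *
          ∑ n ∈ Finset.Ico (j t.castSucc : ℕ) (j t.succ : ℕ),
            (1 + β * (fun n => ω (M + n)) n)⁻¹) ^ (-(d : ℝ) / 2) := by
    intro t
    have e3 : ((glue M N hMN i j) (Fin.natAdd l₁ t).castSucc : ℕ)
        = M + (j t.castSucc : ℕ) :=
      glue_val_ge' hMN i j hil hj0 _ t.castSucc (by simp)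
    have e4 : ((glue M N hMN i j) (Fin.natAdd l₁ t).succ : ℕ) = M + (j t.succ : ℕ) :=
      glue_val_ge' hMN i j hil hj0 _ t.succ
        (by simp only [Fin.val_succ, Fin.coe_natAdd]; omega)
    rw [e3, e4, ← Finset.map_add_left_Ico, Finset.prod_map, Finset.sum_map]
    simp only [addLeftEmbedding_apply]
  rw [Finset.prod_congr rfl fun t _ => hA t, Finset.prod_congr rfl fun t _ => hB t]
  have hpow : ε ^ (l₁ - 1) * ε * ε ^ (l₂ - 1) = ε ^ (l₁ + l₂ - 1) := by
    rw [← pow_succ, ← pow_add]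
    congr 1
    omega
  have hrpow : (2 * π) ^ (-((d : ℝ) * l₁) / 2) * (2 * π) ^ (-((d : ℝ) * l₂) / 2)
      = (2 * π) ^ (-((d : ℝ) * (l₁ + l₂ : ℕ)) / 2) := by
    rw [← Real.rpow_add (by positivity)]
    congr 1
    push_cast
    ring
  rw [← hpow, ← hrpow]
  ring

set_option maxHeartbeats 1000000 in
lemma glue_inj {M N : ℕ} (hMN' : M ≤ N)
    (e : (Σ l : ℕ, Fin (l + 1) → Fin (M + 1)) × (Σ l : ℕ, Fin (l + 1) → Fin (N - M + 1))
      → Σ l : ℕ, Fin (l + 1) → Fin (N + 1))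
    (he : e = fun p => ⟨p.1.1 + p.2.1, glue M N hMN' p.1.2 p.2.2⟩) :
    ∀ p ∈ (pinSet M) ×ˢ (pinSet (N - M)),
      ∀ q ∈ (pinSet M) ×ˢ (pinSet (N - M)), e p = e q → p = q := by
  rintro ⟨⟨l₁, i⟩, ⟨l₂, j⟩⟩ hp ⟨⟨l₁', i'⟩, ⟨l₂', j'⟩⟩ hq hpq
  simp only [Finset.mem_product, pinSet, Finset.mem_sigma, Finset.mem_filter,
    Finset.mem_univ, true_and, Finset.mem_Icc] at hp hq
  obtain ⟨⟨⟨hl1, hl1M⟩, him, hi0, hil⟩, ⟨hl2, hl2M⟩, hjm, hj0, hjl⟩ := hp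
  obtain ⟨⟨⟨hl1', hl1M'⟩, him', hi0', hil'⟩, ⟨hl2', hl2M'⟩, hjm', hj0', hjl'⟩ := hq
  simp only [he, Sigma.mk.inj_iff] at hpq
  obtain ⟨hL, hHE⟩ := hpq
  have hfun : ∀ t : Fin (l₁ + l₂ + 1),
      glue M N hMN' i j t = glue M N hMN' i' j' ⟨(t : ℕ), by omega⟩ :=
    (Fin.heq_fun_iff (by omega)).mp hHE
  -- value of glue i j at position l₁ is M; deduce l₁ = l₁'
  have h1 : (glue M N hMN' i j (⟨l₁, by omega⟩ : Fin (l₁ + l₂ + 1)) : ℕ) = M := by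
    rw [glue_val_le' hMN' i j _ (Fin.last l₁) (by simp [Fin.last]), hil]
    simp [Fin.last]
  have hval : (glue M N hMN' i' j' (⟨l₁, by omega⟩ : Fin (l₁' + l₂' + 1)) : ℕ) = M :=
    (congrArg Fin.val (hfun ⟨l₁, by omega⟩)).symm.trans h1
  have hll : l₁ = l₁' := by
    rcases lt_trichotomy l₁ l₁' with h | h | h
    · exfalso
      have h4 : (glue M N hMN' i' j' (⟨l₁, by omega⟩ : Fin (l₁' + l₂' + 1)) : ℕ)
          = (i' (⟨l₁, by omega⟩ : Fin (l₁' + 1)) : ℕ) :=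
        glue_val_le' hMN' i' j' _ _ rfl
      have h5 : (i' (⟨l₁, by omega⟩ : Fin (l₁' + 1)) : ℕ) = M := h4.symm.trans hval
      have h2 : (i' (⟨l₁, by omega⟩ : Fin (l₁' + 1)) : ℕ) < (i' (Fin.last l₁') : ℕ) :=
        him' (show ((⟨l₁, by omega⟩ : Fin (l₁' + 1)) : ℕ) < (Fin.last l₁' : ℕ) by
          simp [Fin.last]; omega)
      have h3 : (i' (Fin.last l₁') : ℕ) = M := by
        have := congrArg Fin.val hil'
        simpa using this
      omega
    · exact h
    · exfalso
      have h4 : (glue M N hMN' i' j' (⟨l₁, by omega⟩ : Fin (l₁' + l₂' + 1)) : ℕ)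
          = M + (j' (⟨l₁ - l₁', by omega⟩ : Fin (l₂' + 1)) : ℕ) :=
        glue_val_ge' hMN' i' j' hil' hj0' _ _ (by simp; omega)
      have h5 : M + (j' (⟨l₁ - l₁', by omega⟩ : Fin (l₂' + 1)) : ℕ) = M := h4.symm.trans hval
      have h2 : (j' (0 : Fin (l₂' + 1)) : ℕ) < (j' (⟨l₁ - l₁', by omega⟩ : Fin (l₂' + 1)) : ℕ) :=
        hjm' (show ((0 : Fin (l₂' + 1)) : ℕ) < (l₁ - l₁' : ℕ) by simp; omega)
      have h3 : (j' (0 : Fin (l₂' + 1)) : ℕ) = 0 := by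
        have := congrArg Fin.val hj0'
        simpa using this
      omega
  have hll2 : l₂ = l₂' := by omega
  subst hll
  subst hll2
  have hfun' : ∀ t : Fin (l₁ + l₂ + 1), glue M N hMN' i j t = glue M N hMN' i' j' t :=
    fun t => (hfun t).trans (congrArg (glue M N hMN' i' j') (Fin.ext rfl))
  have hii : i = i' := by
    funext t
    apply Fin.ext
    have e1 := glue_val_le' hMN' i j (⟨(t : ℕ), by have := t.isLt; omega⟩) t rfl
    have e2 := glue_val_le' hMN' i' j' (⟨(t : ℕ), by have := t.isLt; omega⟩) t rfl
    have e3 := (congrArg Fin.val (hfun' ⟨(t : ℕ), by have := t.isLt; omega⟩)).symm.trans e1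
    exact e3.symm.trans e2
  have hjj : j = j' := by
    funext t
    apply Fin.ext
    have e1 := glue_val_ge' hMN' i j hil hj0
      (⟨l₁ + (t : ℕ), by have := t.isLt; omega⟩) t rfl
    have e2 := glue_val_ge' hMN' i' j' hil' hj0'
      (⟨l₁ + (t : ℕ), by have := t.isLt; omega⟩) t rfl
    have e3 := (congrArg Fin.val (hfun' ⟨l₁ + (t : ℕ), by have := t.isLt; omega⟩)).symm.trans e1
    have e4 := e2.symm.trans e3
    omega
  subst hii
  subst hjj
  rfl

set_option maxHeartbeats 1000000 in
/-- Superadditivity of the gradient pinning partition function: restricting to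
configurations pinned at `M` gives `Z_N(ω) ≥ Z_M(ω) · ε · Z_{N-M}(θ^M ω)`. -/
theorem gradPinningZ_superadditive (d : ℕ) (hd : 1 ≤ d) (β ε : ℝ)
    (hβ0 : 0 ≤ β) (hβ1 : β < 1) (hε : 0 < ε)
    (ω : ℕ → ℝ) (hω : ∀ n, ω n = 1 ∨ ω n = -1)
    (M N : ℕ) (hM : 0 < M) (hMN : M < N) :
    gradPinningZ d β ε ω N
      ≥ gradPinningZ d β ε ω M * ε *
          gradPinningZ d β ε (fun n => ω (M + n)) (N - M) := by
  have hMN' : M ≤ N := hMN.le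
  rw [ge_iff_le, gradPinningZ_eq, gradPinningZ_eq, gradPinningZ_eq]
  set e : (Σ l : ℕ, Fin (l + 1) → Fin (M + 1)) × (Σ l : ℕ, Fin (l + 1) → Fin (N - M + 1))
      → Σ l : ℕ, Fin (l + 1) → Fin (N + 1) :=
    fun p => ⟨p.1.1 + p.2.1, glue M N hMN' p.1.2 p.2.2⟩ with he
  have hinj := glue_inj hMN' e he
  calc (∑ x ∈ pinSet M, pinTerm d β ε ω M x.1 x.2) * ε *
        ∑ x ∈ pinSet (N - M), pinTerm d β ε (fun n => ω (M + n)) (N - M) x.1 x.2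
      = ∑ p ∈ (pinSet M) ×ˢ (pinSet (N - M)),
          pinTerm d β ε ω M p.1.1 p.1.2 * ε *
            pinTerm d β ε (fun n => ω (M + n)) (N - M) p.2.1 p.2.2 := by
        rw [Finset.sum_mul, Finset.sum_mul_sum, Finset.sum_product]
    _ = ∑ p ∈ (pinSet M) ×ˢ (pinSet (N - M)), pinTerm d β ε ω N (e p).1 (e p).2 := by
        refine Finset.sum_congr rfl fun p hp => ?_
        simp only [Finset.mem_product, pinSet, Finset.mem_sigma, Finset.mem_filter,
          Finset.mem_univ, true_and, Finset.mem_Icc] at hp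
        obtain ⟨⟨⟨hl1, _⟩, _, _, hil⟩, ⟨hl2, _⟩, _, hj0, _⟩ := hp
        exact pinTerm_glue d β ε ω M N hMN' hl1 hl2 p.1.2 p.2.2 hil hj0
    _ = ∑ y ∈ ((pinSet M) ×ˢ (pinSet (N - M))).image e,
          pinTerm d β ε ω N y.1 y.2 := by rw [Finset.sum_image hinj]
    _ ≤ ∑ y ∈ pinSet N, pinTerm d β ε ω N y.1 y.2 := by
        apply Finset.sum_le_sum_of_subset_of_nonneg
        · intro y hy
          rw [Finset.mem_image] at hy
          obtain ⟨p, hp, rfl⟩ := hy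
          rw [Finset.mem_product] at hp
          exact glue_mem hM hMN hp.1 hp.2
        · intro y _ _
          exact pinTerm_nonneg hβ0 hβ1 hε.le hω N y.1 y.2
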